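/- With notation as in the paper's Lemma 3.12, β_ℓ^{(1)} = δ_ℓ^{(1)}: the dimension of the degree-ℓ part of the image of the linearized differential ∂^{(1)} on A_ε/A_ε² equals the dimension of the degree-ℓ part of the image of the ideal I in M/M², and both equal the number of generators bᵢ of degree ℓ in the standard form. -/

import Mathlib

open FreeAlgebra

namespace NgLem312

variable (k m : ℕ)

/-- Generators: `a₁,…,a_k` (left), `b₁,…,b_k` (middle), `c₁,…,c_{n-2k}` (right). -/
abbrev G (k m : ℕ) := Fin k ⊕ (Fin k ⊕ Fin m)

abbrev ga (i : Fin k) : G k m := Sum.inl i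
abbrev gb (i : Fin k) : G k m := Sum.inr (Sum.inl i)
abbrev gc (i : Fin m) : G k m := Sum.inr (Sum.inr i)

/-- Extraction of the linear part of an element of the free algebra: the coefficients
of the single-letter words, as a finitely supported function on the generators.
This realizes the identification of `M/M²` with the span of the generators. -/
noncomputable def lin : FreeAlgebra (ZMod 2) (G k m) →ₗ[ZMod 2] (G k m →₀ ZMod 2) :=
  (Finsupp.lcomapDomain FreeMonoid.of FreeMonoid.of_injective) ∘ₗ
    (MonoidAlgebra.coeffLinearEquiv (ZMod 2)).toLinearMap ∘ₗ
    (FreeAlgebra.equivMonoidAlgebraFreeMonoid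
      (R := ZMod 2) (X := G k m)).toLinearMap

/-- The constant coefficient (coefficient of the empty word). -/
noncomputable def constCoeff (x : FreeAlgebra (ZMod 2) (G k m)) : ZMod 2 :=
  (FreeAlgebra.equivMonoidAlgebraFreeMonoid (R := ZMod 2) (X := G k m) x).coeff 1

/-- Inclusion of the span of the generators back into the free algebra. -/
noncomputable def emb : (G k m →₀ ZMod 2) →ₗ[ZMod 2] FreeAlgebra (ZMod 2) (G k m) :=
  Finsupp.linearCombination (ZMod 2) (ι (ZMod 2))

/-- The degree-`ℓ` graded piece of the span of the generators. -/
noncomputable def Vdeg (deg : G k m → ℤ) (ℓ : ℤ) : Submodule (ZMod 2) (G k m →₀ ZMod 2) :=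
  Submodule.span (ZMod 2) {v | ∃ g : G k m, deg g = ℓ ∧ v = Finsupp.single g 1}

-- auxiliary
noncomputable def psi : FreeAlgebra (ZMod 2) (G k m) →ₐ[ZMod 2]
    TrivSqZeroExt (ZMod 2) (G k m →₀ ZMod 2) :=
  FreeAlgebra.lift (ZMod 2) (fun g => TrivSqZeroExt.inr (Finsupp.single g 1))

lemma psi_eq (x : FreeAlgebra (ZMod 2) (G k m)) :
    psi k m x = TrivSqZeroExt.inl (constCoeff k m x) + TrivSqZeroExt.inr (lin k m x) := by
  set E := FreeAlgebra.equivMonoidAlgebraFreeMonoid (R := ZMod 2) (X := G k m) with hE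
  obtain ⟨f, rfl⟩ := E.symm.surjective x
  have key : ∀ f : FreeMonoid (G k m) →₀ ZMod 2,
      psi k m (E.symm (MonoidAlgebra.ofCoeff f)) = TrivSqZeroExt.inl (f 1) +
        TrivSqZeroExt.inr (Finsupp.lcomapDomain (R := ZMod 2) FreeMonoid.of FreeMonoid.of_injective f) := by
    intro f
    induction f using Finsupp.induction_linear with
    | zero => simp
    | add p q hp hq =>
      simp only [MonoidAlgebra.ofCoeff_add, map_add, Finsupp.add_apply, hp, hq, TrivSqZeroExt.inl_add,
        TrivSqZeroExt.inr_add]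
      abel
    | single w r =>
      induction w using FreeMonoid.recOn with
      | one =>
        have h1 : MonoidAlgebra.ofCoeff (Finsupp.single (1 : FreeMonoid (G k m)) r)
            = algebraMap (ZMod 2) (MonoidAlgebra (ZMod 2) (FreeMonoid (G k m))) r := by
          rw [MonoidAlgebra.coe_algebraMap]; simp
        have h2 : (Finsupp.lcomapDomain (R := ZMod 2) FreeMonoid.of FreeMonoid.of_injective)
            (Finsupp.single (1 : FreeMonoid (G k m)) r) = 0 := by
          ext g
          simp [Finsupp.lcomapDomain, Finsupp.comapDomain_apply,
            Finsupp.single_apply, (FreeMonoid.of_ne_one g).symm]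
        rw [h2, h1, AlgEquiv.commutes, AlgHom.commutes, TrivSqZeroExt.algebraMap_eq_inl']
        simp [Finsupp.single_eq_same]
      | of_mul g t ih =>
        classical
        have hEg : E.symm (MonoidAlgebra.single (FreeMonoid.of g) (1 : ZMod 2)) = ι (ZMod 2) g := by
          have h3 : E (ι (ZMod 2) g)
              = MonoidAlgebra.single (FreeMonoid.of g) (1 : ZMod 2) := by
            rw [hE, FreeAlgebra.equivMonoidAlgebraFreeMonoid]
            simp [MonoidAlgebra.of_apply]
          rw [← h3, AlgEquiv.symm_apply_apply]
        have hpsig : psi k m (ι (ZMod 2) g) = TrivSqZeroExt.inr (Finsupp.single g (1 : ZMod 2)) := by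
          rw [psi, FreeAlgebra.lift_ι_apply]
        have hsplit : MonoidAlgebra.ofCoeff (Finsupp.single (FreeMonoid.of g * t) r)
            = MonoidAlgebra.single (FreeMonoid.of g) (1 : ZMod 2) * MonoidAlgebra.single t r := by
          have h4 := MonoidAlgebra.single_mul_single (R := ZMod 2) (M := FreeMonoid (G k m))
            (FreeMonoid.of g) t (1 : ZMod 2) r
          rw [one_mul] at h4
          exact h4.symm
        have hsym : E.symm (MonoidAlgebra.ofCoeff (Finsupp.single (FreeMonoid.of g * t) r))
            = ι (ZMod 2) g * E.symm (MonoidAlgebra.ofCoeff (Finsupp.single t r)) := by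
          rw [hsplit, map_mul, hEg]; rfl
        rw [hsym, map_mul, hpsig, ih, mul_add, TrivSqZeroExt.inr_mul_inl,
          TrivSqZeroExt.inr_mul_inr, add_zero, op_smul_eq_smul]
        rcases eq_or_ne t 1 with rfl | ht
        · have c1 : (Finsupp.single (1 : FreeMonoid (G k m)) r) 1 = r := Finsupp.single_eq_same
          have c2 : (Finsupp.single (FreeMonoid.of g * 1) r) 1 = 0 := by
            rw [mul_one, Finsupp.single_apply, if_neg (FreeMonoid.of_ne_one g)]
          have c3 : (Finsupp.lcomapDomain (R := ZMod 2) FreeMonoid.of FreeMonoid.of_injective)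
              (Finsupp.single (FreeMonoid.of g * 1) r) = Finsupp.single g r := by
            ext h
            simp only [Finsupp.lcomapDomain, LinearMap.coe_mk, AddHom.coe_mk,
              Finsupp.comapDomain_apply, mul_one]
            rw [Finsupp.single_apply, Finsupp.single_apply]
            simp [FreeMonoid.of_injective.eq_iff]
          rw [c1, c2, c3]
          simp [Finsupp.smul_single]
        · have hne : FreeMonoid.of g * t ≠ 1 := by
            intro h
            have h5 := congrArg FreeMonoid.toList h
            simp [FreeMonoid.toList_mul] at h5
          have c1 : (Finsupp.single t r) 1 = 0 := by
            rw [Finsupp.single_apply, if_neg (fun h => ht h)]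
          have c2 : (Finsupp.single (FreeMonoid.of g * t) r) 1 = 0 := by
            rw [Finsupp.single_apply, if_neg hne]
          have c3 : (Finsupp.lcomapDomain (R := ZMod 2) FreeMonoid.of FreeMonoid.of_injective)
              (Finsupp.single (FreeMonoid.of g * t) r) = 0 := by
            ext h
            simp only [Finsupp.lcomapDomain, LinearMap.coe_mk, AddHom.coe_mk,
              Finsupp.comapDomain_apply]
            rw [Finsupp.single_apply, if_neg, Finsupp.coe_zero, Pi.zero_apply]
            intro hw
            have h6 := congrArg FreeMonoid.toList hw
            rcases t with _ | ⟨x, xs⟩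
            · exact ht rfl
            · change g :: x :: xs = [h] at h6
              exact List.cons_ne_nil x xs (List.cons.inj h6).2
          rw [c1, c2, c3]
          simp
  have h1 : constCoeff k m (E.symm f) = f.coeff 1 := by
    simp [constCoeff, hE]
  have h2 : lin k m (E.symm f)
      = Finsupp.lcomapDomain (R := ZMod 2) FreeMonoid.of FreeMonoid.of_injective f.coeff := by
    simp only [lin, LinearMap.coe_comp, Function.comp_apply, hE]
    exact congrArg _ (congrArg _
      ((FreeAlgebra.equivMonoidAlgebraFreeMonoid (R := ZMod 2) (X := G k m)).apply_symm_apply f))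
  rw [h1, h2]; have hk := key f.coeff; rw [MonoidAlgebra.ofCoeff_coeff] at hk; exact hk

lemma fst_psi (x : FreeAlgebra (ZMod 2) (G k m)) :
    (psi k m x).fst = constCoeff k m x := by
  rw [psi_eq]; simp

lemma snd_psi (x : FreeAlgebra (ZMod 2) (G k m)) :
    (psi k m x).snd = lin k m x := by
  rw [psi_eq]; simp

lemma constCoeff_mul (x y : FreeAlgebra (ZMod 2) (G k m)) :
    constCoeff k m (x * y) = constCoeff k m x * constCoeff k m y := by
  rw [← fst_psi, ← fst_psi, ← fst_psi, map_mul, TrivSqZeroExt.fst_mul]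

lemma lin_mul (x y : FreeAlgebra (ZMod 2) (G k m)) :
    lin k m (x * y) = constCoeff k m x • lin k m y + constCoeff k m y • lin k m x := by
  rw [← snd_psi, ← snd_psi, ← snd_psi, ← fst_psi, ← fst_psi, map_mul,
    TrivSqZeroExt.snd_mul, op_smul_eq_smul]

lemma constCoeff_zero : constCoeff k m 0 = 0 := by simp [constCoeff]

lemma constCoeff_add (x y : FreeAlgebra (ZMod 2) (G k m)) :
    constCoeff k m (x + y) = constCoeff k m x + constCoeff k m y := by
  simp only [constCoeff, map_add]
  rfl

lemma constCoeff_neg (x : FreeAlgebra (ZMod 2) (G k m)) :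
    constCoeff k m (-x) = -constCoeff k m x := by
  simp only [constCoeff, map_neg]
  rfl

lemma range_eq
    (D : FreeAlgebra (ZMod 2) (G k m) →ₗ[ZMod 2] FreeAlgebra (ZMod 2) (G k m))
    (hlin_a : ∀ i : Fin k,
      lin k m (D (ι (ZMod 2) (ga k m i))) = Finsupp.single (gb k m i) 1)
    (hlin_b : ∀ i : Fin k, lin k m (D (ι (ZMod 2) (gb k m i))) = 0)
    (hlin_c : ∀ i : Fin m, lin k m (D (ι (ZMod 2) (gc k m i))) = 0) :
    LinearMap.range (lin k m ∘ₗ D ∘ₗ emb k m)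
      = Finsupp.supported (ZMod 2) (ZMod 2) (Set.range fun i : Fin k => gb k m i) := by
  apply le_antisymm
  · rintro y ⟨v, rfl⟩
    induction v using Finsupp.induction_linear with
    | zero => simp only [map_zero]; exact zero_mem _
    | add p q hp hq => simp only [map_add]; exact add_mem hp hq
    | single g r =>
      have he : emb k m (Finsupp.single g r) = r • ι (ZMod 2) g := by
        simp [emb, Finsupp.linearCombination_single]
      rcases g with i | i | i
      · simp only [LinearMap.comp_apply, he, map_smul, hlin_a i]
        exact Submodule.smul_mem _ _ (Finsupp.single_mem_supported _ _ ⟨i, rfl⟩)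
      · simp only [LinearMap.comp_apply, he, map_smul, hlin_b i, smul_zero]
        exact zero_mem _
      · simp only [LinearMap.comp_apply, he, map_smul, hlin_c i, smul_zero]
        exact zero_mem _
  · rw [Finsupp.supported_eq_span_single, Submodule.span_le]
    rintro _ ⟨g', ⟨i, rfl⟩, rfl⟩
    refine ⟨Finsupp.single (ga k m i) 1, ?_⟩
    have he : emb k m (Finsupp.single (ga k m i) 1) = ι (ZMod 2) (ga k m i) := by
      simp [emb, Finsupp.linearCombination_single]
    simp only [LinearMap.comp_apply, he, hlin_a i]

lemma span_image_eq
    (D : FreeAlgebra (ZMod 2) (G k m) →ₗ[ZMod 2] FreeAlgebra (ZMod 2) (G k m))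
    (hconst : ∀ g : G k m, constCoeff k m (D (ι (ZMod 2) g)) = 0)
    (hlin_a : ∀ i : Fin k,
      lin k m (D (ι (ZMod 2) (ga k m i))) = Finsupp.single (gb k m i) 1)
    (hlin_b : ∀ i : Fin k, lin k m (D (ι (ZMod 2) (gb k m i))) = 0)
    (hlin_c : ∀ i : Fin m, lin k m (D (ι (ZMod 2) (gc k m i))) = 0) :
    Submodule.span (ZMod 2)
        (lin k m '' {x | x ∈ TwoSidedIdeal.span {y | ∃ g : G k m, y = D (ι (ZMod 2) g)}})
      = Finsupp.supported (ZMod 2) (ZMod 2) (Set.range fun i : Fin k => gb k m i) := by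
  set S := Finsupp.supported (ZMod 2) (ZMod 2)
    (Set.range fun i : Fin k => gb k m i) with hSdef
  apply le_antisymm
  · rw [Submodule.span_le]
    rintro _ ⟨x, hx, rfl⟩
    let J : TwoSidedIdeal (FreeAlgebra (ZMod 2) (G k m)) :=
      TwoSidedIdeal.mk' {x | constCoeff k m x = 0 ∧ lin k m x ∈ S}
        ⟨constCoeff_zero k m, by simp only [map_zero]; exact zero_mem _⟩
        (fun {x y} hx hy => ⟨by rw [constCoeff_add, hx.1, hy.1, add_zero],
          by rw [map_add]; exact add_mem hx.2 hy.2⟩)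
        (fun {x} hx => ⟨by rw [constCoeff_neg, hx.1, neg_zero],
          by rw [map_neg]; exact neg_mem hx.2⟩)
        (fun {x y} hy => ⟨by rw [constCoeff_mul, hy.1, mul_zero],
          by rw [lin_mul, hy.1, zero_smul, add_zero]
             exact Submodule.smul_mem _ _ hy.2⟩)
        (fun {x y} hx => ⟨by rw [constCoeff_mul, hx.1, zero_mul],
          by rw [lin_mul, hx.1, zero_smul, zero_add]
             exact Submodule.smul_mem _ _ hx.2⟩)
    have hgen : {y | ∃ g : G k m, y = D (ι (ZMod 2) g)} ⊆ (J : Set _) := by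
      rintro _ ⟨g, rfl⟩
      rw [SetLike.mem_coe, TwoSidedIdeal.mem_mk']
      refine ⟨hconst g, ?_⟩
      rcases g with i | i | i
      · rw [hlin_a i]
        exact Finsupp.single_mem_supported _ _ ⟨i, rfl⟩
      · rw [hlin_b i]; exact zero_mem _
      · rw [hlin_c i]; exact zero_mem _
    have hJ : x ∈ J := TwoSidedIdeal.mem_span_iff.mp hx J hgen
    rw [TwoSidedIdeal.mem_mk'] at hJ
    exact hJ.2
  · rw [hSdef, Finsupp.supported_eq_span_single, Submodule.span_le]
    rintro _ ⟨g', ⟨i, rfl⟩, rfl⟩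
    exact Submodule.subset_span ⟨D (ι (ZMod 2) (ga k m i)),
      TwoSidedIdeal.subset_span ⟨ga k m i, rfl⟩, hlin_a i⟩

lemma Vdeg_eq (deg : G k m → ℤ) (ℓ : ℤ) :
    Vdeg k m deg ℓ = Finsupp.supported (ZMod 2) (ZMod 2) {g | deg g = ℓ} := by
  rw [Vdeg, Finsupp.supported_eq_span_single]
  congr 1
  ext v
  constructor
  · rintro ⟨g, h1, rfl⟩; exact ⟨g, h1, rfl⟩
  · rintro ⟨g, h1, rfl⟩; exact ⟨g, h1, rfl⟩

lemma supported_inf (s t : Set (G k m)) :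
    Finsupp.supported (ZMod 2) (ZMod 2) s ⊓ Finsupp.supported (ZMod 2) (ZMod 2) t
      = Finsupp.supported (ZMod 2) (ZMod 2) (s ∩ t) := by
  ext v
  simp [Finsupp.mem_supported, Set.subset_inter_iff]

lemma finrank_supported (s : Set (G k m)) :
    Module.finrank (ZMod 2) ↥(Finsupp.supported (ZMod 2) (ZMod 2) s) = Nat.card s := by
  classical
  haveI : Fintype ↥s := Fintype.ofFinite ↥s
  rw [LinearEquiv.finrank_eq (Finsupp.supportedEquivFinsupp s),
    Module.finrank_eq_card_basis (Finsupp.basisSingleOne (R := ZMod 2) (ι := ↥s)),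
    Nat.card_eq_fintype_card]

end NgLem312

open NgLem312 in
/-- Lemma 3.12 (first-order part): with the linear part of `∂` in standard form
(`∂₁aᵢ = bᵢ`, `∂₁bᵢ = ∂₁cᵢ = 0`) and `∂` of each generator having no constant term
(augmentation `ε = 0`), the dimension `β_ℓ⁽¹⁾` of the degree-`ℓ` part of the image of
the linearized differential `∂⁽¹⁾` on `M/M²` equals the dimension `δ_ℓ⁽¹⁾` of the
degree-`ℓ` part of the image of the ideal `I = ⟨∂aᵢ⟩` in `M/M²`, and both equal the
number of generators `bᵢ` of degree `ℓ`. -/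
theorem beta_eq_delta_first_order {k m : ℕ} (deg : G k m → ℤ)
    (D : FreeAlgebra (ZMod 2) (G k m) →ₗ[ZMod 2] FreeAlgebra (ZMod 2) (G k m))
    (hLeib : ∀ v w, D (v * w) = D v * w + v * D w)
    (hD2 : ∀ x, D (D x) = 0)
    (hconst : ∀ g : G k m, constCoeff k m (D (ι (ZMod 2) g)) = 0)
    (hlin_a : ∀ i : Fin k,
      lin k m (D (ι (ZMod 2) (ga k m i))) = Finsupp.single (gb k m i) 1)
    (hlin_b : ∀ i : Fin k, lin k m (D (ι (ZMod 2) (gb k m i))) = 0)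
    (hlin_c : ∀ i : Fin m, lin k m (D (ι (ZMod 2) (gc k m i))) = 0)
    (ℓ : ℤ) :
    Module.finrank (ZMod 2)
        ↥(LinearMap.range (lin k m ∘ₗ D ∘ₗ emb k m) ⊓ Vdeg k m deg ℓ)
      = Module.finrank (ZMod 2)
        ↥(Submodule.span (ZMod 2)
            (lin k m ''
              {x | x ∈ TwoSidedIdeal.span {y | ∃ g : G k m, y = D (ι (ZMod 2) g)}})
          ⊓ Vdeg k m deg ℓ) ∧
    Module.finrank (ZMod 2)
        ↥(LinearMap.range (lin k m ∘ₗ D ∘ₗ emb k m) ⊓ Vdeg k m deg ℓ)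
      = (Finset.univ.filter (fun i : Fin k => deg (gb k m i) = ℓ)).card := by
  classical
  have h1 := range_eq k m D hlin_a hlin_b hlin_c
  have h2 := span_image_eq k m D hconst hlin_a hlin_b hlin_c
  have h3 := Vdeg_eq k m deg ℓ
  rw [h1, h2, h3, supported_inf]
  refine ⟨rfl, ?_⟩
  rw [finrank_supported]
  have hinj : Function.Injective (fun i : Fin k => gb k m i) := fun i j h => by
    simpa using h
  have hset : (Set.range fun i : Fin k => gb k m i) ∩ {g | deg g = ℓ}
      = (fun i : Fin k => gb k m i) '' {i : Fin k | deg (gb k m i) = ℓ} := by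
    ext g
    constructor
    · rintro ⟨⟨i, rfl⟩, hd⟩; exact ⟨i, hd, rfl⟩
    · rintro ⟨i, hd, rfl⟩; exact ⟨⟨i, rfl⟩, hd⟩
  rw [hset, Nat.card_coe_set_eq, Set.ncard_image_of_injective _ hinj,
    Set.ncard_eq_toFinset_card', Set.toFinset_setOf]
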